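/- For any integer n ≥ 1 and all real x with 0 ≤ x ≤ n, |(1 - x/n)^n - e^{-x}| ≤ 1/(e·n). -/

import Mathlib

-- auxiliary: y * exp (-y) ≤ exp (-1) for y ≥ 0 (indeed all y)
lemma aux_mul_exp_neg_le (y : ℝ) : y * Real.exp (-y) ≤ Real.exp (-1) := by
  have h := Real.add_one_le_exp (y - 1)
  have h2 : y ≤ Real.exp (y - 1) := by linarith
  have := mul_le_mul_of_nonneg_right h2 (Real.exp_pos (-y)).le
  calc y * Real.exp (-y) ≤ Real.exp (y - 1) * Real.exp (-y) := this
    _ = Real.exp (-1) := by rw [← Real.exp_add]; ring_nf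

theorem exp_approx_bound (n : ℕ) (hn : 1 ≤ n) (x : ℝ) (hx0 : 0 ≤ x) (hxn : x ≤ n) :
    |(1 - x / n) ^ n - Real.exp (-x)| ≤ 1 / (Real.exp 1 * n) := by
  have hN : (0:ℝ) < n := by exact_mod_cast Nat.pos_of_ne_zero (by omega)
  set N : ℝ := (n:ℝ) with hNdef
  set g : ℝ → ℝ := fun y => Real.exp (-y) - (1 - y / N) ^ n with hg
  -- derivative of g
  have hderiv : ∀ y : ℝ, HasDerivAt g ((1 - y / N) ^ (n - 1) - Real.exp (-y)) y := by
    intro y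
    have h1 : HasDerivAt (fun y : ℝ => Real.exp (-y)) (-Real.exp (-y)) y := by
      simpa using (hasDerivAt_neg y).exp
    have h2 : HasDerivAt (fun y : ℝ => 1 - y / N) (-(1/N)) y := by
      simpa using ((hasDerivAt_id y).div_const N).const_sub 1
    have h3 := h2.pow n
    have := h1.sub h3
    refine this.congr_deriv ?_
    rw [← hNdef, mul_neg, mul_assoc, mul_comm ((1 - y / N) ^ (n - 1)), ← mul_assoc, mul_one_div_cancel hN.ne', one_mul]
    ring
  -- lower bound: g x ≥ 0 on [0,N]
  have hbase : ∀ y : ℝ, 0 ≤ y → y ≤ N → 0 ≤ 1 - y / N := by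
    intro y hy0 hyN
    have : y / N ≤ 1 := (div_le_one hN).mpr hyN
    linarith
  have hgnonneg : ∀ y : ℝ, 0 ≤ y → y ≤ N → 0 ≤ g y := by
    intro y hy0 hyN
    have hb := hbase y hy0 hyN
    have h1 : 1 - y / N ≤ Real.exp (-(y/N)) := by
      have := Real.add_one_le_exp (-(y/N)); linarith
    have h2 : (1 - y / N) ^ n ≤ Real.exp (-(y/N)) ^ n := pow_le_pow_left₀ hb h1 n
    have h3 : Real.exp (-(y/N)) ^ n = Real.exp (-y) := by
      rw [← Real.exp_nat_mul]
      congr 1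
      simp only [hNdef]
      field_simp
    simp only [hg]
    rw [h3] at h2
    linarith
  -- max on compact interval
  have hcont : ContinuousOn g (Set.Icc 0 N) := by fun_prop
  obtain ⟨c, hcmem, hmax⟩ := isCompact_Icc.exists_isMaxOn (Set.nonempty_Icc.mpr hN.le) hcont
  obtain ⟨hc0, hcN⟩ := hcmem
  -- key bound on g c
  have hkey : g c ≤ 1 / (Real.exp 1 * N) := by
    rcases eq_or_lt_of_le hc0 with h0 | h0
    · -- c = 0
      have : g c = 0 := by simp [hg, ← h0]
      rw [this]
      positivity
    rcases eq_or_lt_of_le hcN with hNc | hNc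
    · -- c = N
      have : g c = Real.exp (-N) := by
        simp [hg, hNc, div_self hN.ne', zero_pow (by omega : n ≠ 0)]
      rw [this, le_div_iff₀ (by positivity)]
      have h2 : N ≤ Real.exp (N - 1) := by
        have := Real.add_one_le_exp (N - 1); linarith
      have h3 : Real.exp (-N) * Real.exp (N - 1) = Real.exp (-1) := by
        rw [← Real.exp_add]; ring_nf
      have h4 : Real.exp (-1) * Real.exp 1 = 1 := by
        rw [← Real.exp_add]; simp
      have h5 : Real.exp (-N) * N ≤ Real.exp (-1) := by
        calc Real.exp (-N) * N ≤ Real.exp (-N) * Real.exp (N - 1) :=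
              mul_le_mul_of_nonneg_left h2 (Real.exp_pos (-N)).le
          _ = Real.exp (-1) := h3
      calc Real.exp (-N) * (Real.exp 1 * N) = (Real.exp (-N) * N) * Real.exp 1 := by ring
        _ ≤ Real.exp (-1) * Real.exp 1 :=
            mul_le_mul_of_nonneg_right h5 (Real.exp_pos 1).le
        _ = 1 := h4
    · -- interior critical point
      have hint : c ∈ interior (Set.Icc 0 N) := by
        rw [interior_Icc]; exact ⟨h0, hNc⟩
      have hloc : IsLocalMax g c := hmax.isLocalMax (Icc_mem_nhds h0 hNc)
      have hd0 : (1 - c / N) ^ (n - 1) - Real.exp (-c) = 0 := by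
        have := hloc.deriv_eq_zero
        rwa [(hderiv c).deriv] at this
      have hcrit : (1 - c / N) ^ (n - 1) = Real.exp (-c) := by linarith
      have hpow : (1 - c / N) ^ n = (1 - c / N) ^ (n - 1) * (1 - c / N) := by
        rw [← pow_succ]
        congr 1
        omega
      have hgc : g c = (c / N) * Real.exp (-c) := by
        simp only [hg]
        rw [hpow, hcrit]
        ring
      rw [hgc]
      have h1 : c * Real.exp (-c) ≤ Real.exp (-1) := aux_mul_exp_neg_le c
      have h4 : Real.exp (-1) * Real.exp 1 = 1 := by rw [← Real.exp_add]; simp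
      rw [div_mul_eq_mul_div, div_le_div_iff₀ hN (by positivity)]
      calc c * Real.exp (-c) * (Real.exp 1 * N) = (c * Real.exp (-c) * Real.exp 1) * N := by ring
        _ ≤ (Real.exp (-1) * Real.exp 1) * N := by
            apply mul_le_mul_of_nonneg_right _ hN.le
            exact mul_le_mul_of_nonneg_right h1 (Real.exp_pos 1).le
        _ = 1 * N := by rw [h4]
  -- conclude
  have h1 : g x ≤ g c := hmax ⟨hx0, hxn⟩
  have h2 : 0 ≤ g x := hgnonneg x hx0 hxn
  rw [abs_sub_comm, abs_of_nonneg h2]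
  exact h1.trans hkey
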